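/- arXiv:1205.3340 — 5 statements merged into one kernel-verified Lean document; each statement's English description precedes it below -/
import Mathlib

section
/- Let ρ = β·π + (1−β)·σ on C^d ⊗ C^d, where π is the projector onto a maximally entangled pure state, σ is a density matrix with Tr(π σ) = 0, and 0 ≤ β ≤ 1. If β > 1/d, then ρ is entangled (not separable). -/
open Matrix
open scoped Kronecker ComplexOrder

noncomputable section

/-- A density matrix: positive semi-definite (hence Hermitian) with trace 1. -/
def IsDensity {n : Type*} [Fintype n] [DecidableEq n] (ρ : Matrix n n ℂ) : Prop :=
  ρ.PosSemidef ∧ ρ.trace = 1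

/-- Separability: a convex combination of tensor products of density matrices. -/
def SepState {d₁ d₂ : ℕ} (ρ : Matrix (Fin d₁ × Fin d₂) (Fin d₁ × Fin d₂) ℂ) : Prop :=
  ∃ (n : ℕ) (w : Fin n → ℝ) (σ₁ : Fin n → Matrix (Fin d₁) (Fin d₁) ℂ)
    (σ₂ : Fin n → Matrix (Fin d₂) (Fin d₂) ℂ),
    (∀ i, 0 ≤ w i) ∧ (∑ i, w i = 1) ∧ (∀ i, IsDensity (σ₁ i)) ∧ (∀ i, IsDensity (σ₂ i)) ∧
    ρ = ∑ i, (w i : ℂ) • (σ₁ i ⊗ₖ σ₂ i)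

/-- Partial trace over the second factor. -/
def ptraceB {dA dB : ℕ} (ρ : Matrix (Fin dA × Fin dB) (Fin dA × Fin dB) ℂ) :
    Matrix (Fin dA) (Fin dA) ℂ :=
  Matrix.of fun a a' => ∑ b : Fin dB, ρ (a, b) (a', b)

lemma psd_diag_re_nonneg {n : Type*} [Fintype n] [DecidableEq n] {M : Matrix n n ℂ}
    (hM : M.PosSemidef) (i : n) : 0 ≤ (M i i).re := by
  have := hM.re_dotProduct_nonneg (Pi.single i 1)
  simpa [dotProduct, mulVec, Pi.single_apply] using this

/-- For positive semidefinite matrices, `Re Tr(CD) ≤ Re Tr(C) ⬝ Re Tr(D)`. -/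
lemma psd_trace_mul_re_le {n : Type*} [Fintype n] [DecidableEq n] {C D : Matrix n n ℂ}
    (hC : C.PosSemidef) (hD : D.PosSemidef) :
    (C * D).trace.re ≤ C.trace.re * D.trace.re := by
  have hH := hC.isHermitian
  set U : Matrix n n ℂ := (hH.eigenvectorUnitary : Matrix n n ℂ) with hU
  have hUU : U * star U = 1 := (Matrix.mem_unitaryGroup_iff).mp hH.eigenvectorUnitary.2
  have hUU' : star U * U = 1 := (Matrix.mem_unitaryGroup_iff').mp hH.eigenvectorUnitary.2
  set Λ : Matrix n n ℂ := diagonal (RCLike.ofReal ∘ hH.eigenvalues) with hΛ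
  have hspec : C = U * Λ * star U := hH.spectral_theorem
  set E : Matrix n n ℂ := star U * D * U with hE
  have hEpsd : E.PosSemidef := by
    simpa [hE, star_eq_conjTranspose] using hD.conjTranspose_mul_mul_same U
  have hTrE : E.trace = D.trace := by
    rw [hE, trace_mul_cycle, hUU, one_mul]
  have hdiag : ∀ F : Matrix n n ℂ, (Λ * F).trace = ∑ i, (hH.eigenvalues i : ℂ) * F i i := by
    intro F
    simp [Matrix.trace, Matrix.diag, hΛ, Matrix.diagonal_mul]
  have hTrCD : (C * D).trace = ∑ i, (hH.eigenvalues i : ℂ) * E i i := by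
    conv_lhs => rw [hspec]
    rw [mul_assoc (U * Λ), trace_mul_comm (U * Λ) (star U * D), ← mul_assoc,
      trace_mul_comm _ Λ, hdiag, hE]
  have hTrC : C.trace = ∑ i, (hH.eigenvalues i : ℂ) := by
    have h2 : C.trace = (Λ * 1).trace := by
      conv_lhs => rw [hspec]
      rw [trace_mul_cycle, hUU', one_mul, mul_one]
    rw [h2, hdiag]
    simp
  have hre : (C * D).trace.re = ∑ i, hH.eigenvalues i * (E i i).re := by
    rw [hTrCD, Complex.re_sum]
    exact Finset.sum_congr rfl fun i _ => by simp
  rw [hre]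
  have hTrCre : C.trace.re = ∑ i, hH.eigenvalues i := by
    rw [hTrC, Complex.re_sum]; simp
  have hTrDre : D.trace.re = ∑ i, (E i i).re := by
    rw [← hTrE, Matrix.trace, Complex.re_sum]; rfl
  rw [hTrCre, hTrDre, Finset.sum_mul]
  refine Finset.sum_le_sum fun i _ => ?_
  have h1 : (E i i).re ≤ ∑ j, (E j j).re :=
    Finset.single_le_sum (fun j _ => psd_diag_re_nonneg hEpsd j) (Finset.mem_univ i)
  exact mul_le_mul_of_nonneg_left h1 (hC.eigenvalues_nonneg i)

/-- Trace of a rank-one projector times a Kronecker product, as a matrix trace. -/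
lemma trace_proj_kron {d : ℕ} (χ : Fin d × Fin d → ℂ)
    (A B : Matrix (Fin d) (Fin d) ℂ) :
    (Matrix.vecMulVec χ (star χ) * (A ⊗ₖ B)).trace
      = ((Matrix.of fun a b => χ (a, b))ᴴ * A * (Matrix.of fun a b => χ (a, b)) * Bᵀ).trace := by
  simp only [Matrix.trace, Matrix.diag, Matrix.mul_apply, Matrix.vecMulVec_apply,
    Matrix.conjTranspose_apply, Matrix.transpose_apply, Matrix.kroneckerMap_apply,
    Matrix.of_apply, Pi.star_apply, Fintype.sum_prod_type, Finset.sum_mul, Finset.mul_sum]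
  have h1 : (∑ p : (Fin d × Fin d) × (Fin d × Fin d),
      χ p.1 * star (χ p.2) * (A p.2.1 p.1.1 * B p.2.2 p.1.2))
      = ∑ x : Fin d, ∑ x_1 : Fin d, ∑ x_2 : Fin d, ∑ x_3 : Fin d,
        χ (x, x_1) * star (χ (x_2, x_3)) * (A x_2 x * B x_3 x_1) := by
    rw [Fintype.sum_prod_type]
    simp [Fintype.sum_prod_type]
  have h2 : (∑ q : (Fin d × Fin d) × (Fin d × Fin d),
      star (χ (q.2.2, q.1.1)) * A q.2.2 q.2.1 * χ (q.2.1, q.1.2) * B q.1.1 q.1.2)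
      = ∑ x : Fin d, ∑ x_1 : Fin d, ∑ x_2 : Fin d, ∑ i : Fin d,
        star (χ (i, x)) * A i x_2 * χ (x_2, x_1) * B x x_1 := by
    rw [Fintype.sum_prod_type]
    simp [Fintype.sum_prod_type]
  rw [← h1, ← h2]
  refine Fintype.sum_equiv
    ⟨fun p : (Fin d × Fin d) × (Fin d × Fin d) => ((p.2.2, p.1.2), (p.1.1, p.2.1)),
     fun q => ((q.2.1, q.1.2), (q.2.2, q.1.1)), fun p => rfl, fun q => rfl⟩ _ _ fun p => ?_
  simp only [Equiv.coe_fn_mk]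
  ring

/-- Splitted states: if `ρ = β π + (1−β) σ` with `π` the projector onto a
maximally entangled pure state, `σ` a density matrix orthogonal to `π`, and
`β > 1/d`, then `ρ` is entangled. -/
theorem splitted_state_entangled {d : ℕ} (hd : 0 < d)
    (χ : Fin d × Fin d → ℂ)
    (π : Matrix (Fin d × Fin d) (Fin d × Fin d) ℂ)
    (hπ : π = Matrix.vecMulVec χ (star χ))
    (hπdens : IsDensity π)
    (hmax : ptraceB π = ((d : ℂ))⁻¹ • 1)
    (σ : Matrix (Fin d × Fin d) (Fin d × Fin d) ℂ)
    (hσ : IsDensity σ) (horth : (π * σ).trace = 0)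
    (β : ℝ) (hβ0 : 0 ≤ β) (hβ1 : β ≤ 1) (hβ : 1 / d < β)
    (ρ : Matrix (Fin d × Fin d) (Fin d × Fin d) ℂ)
    (hρ : ρ = (β : ℂ) • π + ((1 - β : ℝ) : ℂ) • σ) :
    ¬ SepState ρ := by
  rintro ⟨n, w, σ₁, σ₂, hw0, hw1, hd1, hd2, hsep⟩
  set M : Matrix (Fin d) (Fin d) ℂ := Matrix.of fun a b => χ (a, b) with hM
  -- M Mᴴ = (1/d) 1
  have hMM : M * Mᴴ = ((d : ℂ))⁻¹ • 1 := by
    ext a a'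
    have h := congrFun (congrFun (congrArg (fun m => (m : Matrix (Fin d) (Fin d) ℂ)) hmax) a) a'
    simp only [ptraceB, hπ, Matrix.of_apply, Matrix.vecMulVec_apply, Pi.star_apply] at h
    simpa [hM, Matrix.mul_apply, Matrix.conjTranspose_apply] using h
  -- trace of π * π equals 1
  have hπtr : π.trace = 1 := hπdens.2
  have hππ : (π * π).trace = 1 := by
    have hexp : (π * π).trace
        = (∑ p : Fin d × Fin d, χ p * star (χ p)) * ∑ q : Fin d × Fin d, χ q * star (χ q) := by
      rw [Finset.sum_mul_sum]
      simp only [hπ, Matrix.trace, Matrix.diag, Matrix.mul_apply, Matrix.vecMulVec_apply,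
        Pi.star_apply]
      rw [Finset.sum_comm]
      exact Finset.sum_congr rfl fun p _ => Finset.sum_congr rfl fun q _ => by ring
    have htr : π.trace = ∑ p : Fin d × Fin d, χ p * star (χ p) := by
      simp [hπ, Matrix.trace, Matrix.diag, Matrix.vecMulVec_apply]
    rw [hexp, ← htr, hπtr, one_mul]
  -- trace of π * ρ equals β
  have hπρ : (π * ρ).trace = (β : ℂ) := by
    rw [hρ, mul_add, mul_smul_comm, mul_smul_comm, trace_add, trace_smul, trace_smul,
      hππ, horth, smul_zero, add_zero, smul_eq_mul, mul_one]
  -- bound each separable term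
  have hbound : ∀ i, ((π * (σ₁ i ⊗ₖ σ₂ i)).trace).re ≤ (d : ℝ)⁻¹ := by
    intro i
    have hkey := trace_proj_kron χ (σ₁ i) (σ₂ i)
    have hCpsd : (Mᴴ * σ₁ i * M).PosSemidef := (hd1 i).1.conjTranspose_mul_mul_same M
    have hDpsd : ((σ₂ i)ᵀ).PosSemidef := (hd2 i).1.transpose
    have hCtr : (Mᴴ * σ₁ i * M).trace = ((d : ℂ))⁻¹ := by
      rw [trace_mul_cycle, hMM, smul_mul_assoc, one_mul, trace_smul,
        (hd1 i).2, smul_eq_mul, mul_one]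
    have hDtr : ((σ₂ i)ᵀ).trace = 1 := by rw [trace_transpose]; exact (hd2 i).2
    have := psd_trace_mul_re_le hCpsd hDpsd
    rw [hCtr, hDtr] at this
    have hcast : (((d : ℂ))⁻¹).re = (d : ℝ)⁻¹ := by
      rw [show ((d : ℂ))⁻¹ = (((d : ℝ)⁻¹ : ℝ) : ℂ) by push_cast; ring, Complex.ofReal_re]
    rw [hπ, hkey]
    calc ((Mᴴ * σ₁ i * M * (σ₂ i)ᵀ).trace).re
        ≤ (((d : ℂ))⁻¹).re * (1 : ℂ).re := this
      _ = (d : ℝ)⁻¹ := by rw [hcast, Complex.one_re, mul_one]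
  -- combine
  have hsum : (π * ρ).trace = ∑ i, (w i : ℂ) * (π * (σ₁ i ⊗ₖ σ₂ i)).trace := by
    rw [hsep, Finset.mul_sum, trace_sum]
    exact Finset.sum_congr rfl fun i _ => by rw [mul_smul_comm, trace_smul, smul_eq_mul]
  have hre : β = ∑ i, w i * ((π * (σ₁ i ⊗ₖ σ₂ i)).trace).re := by
    have := congrArg Complex.re (hπρ.symm.trans hsum)
    rw [Complex.ofReal_re, Complex.re_sum] at this
    rw [this]
    exact Finset.sum_congr rfl fun i _ => by simp
  have hle : β ≤ (d : ℝ)⁻¹ := by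
    rw [hre]
    calc ∑ i, w i * ((π * (σ₁ i ⊗ₖ σ₂ i)).trace).re
        ≤ ∑ i, w i * (d : ℝ)⁻¹ :=
          Finset.sum_le_sum fun i _ => mul_le_mul_of_nonneg_left (hbound i) (hw0 i)
      _ = (d : ℝ)⁻¹ := by rw [← Finset.sum_mul, hw1, one_mul]
  rw [one_div] at hβ
  linarith
end
end

section
/- If a density matrix ρ on C^{d₁} ⊗ C^{d₂} is separable, then its partial transpose ρ^{T_A} (transpose on the first factor) is positive semi-definite. -/
open Matrix
open scoped Kronecker ComplexOrder

noncomputable section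

/-- Partial transpose on the first tensor factor. -/
def ptransposeA {d₁ d₂ : ℕ} (ρ : Matrix (Fin d₁ × Fin d₂) (Fin d₁ × Fin d₂) ℂ) :
    Matrix (Fin d₁ × Fin d₂) (Fin d₁ × Fin d₂) ℂ :=
  Matrix.of fun p q => ρ (q.1, p.2) (p.1, q.2)

lemma conjTranspose_kron {m n : Type*} [Fintype m] [Fintype n]
    (A : Matrix m m ℂ) (B : Matrix n n ℂ) : (A ⊗ₖ B)ᴴ = Aᴴ ⊗ₖ Bᴴ := by
  ext p q
  simp [conjTranspose_apply, kroneckerMap_apply]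

lemma kron_posSemidef {m n : Type*} [Fintype m] [Fintype n] [DecidableEq m] [DecidableEq n]
    {A : Matrix m m ℂ} {B : Matrix n n ℂ}
    (hA : A.PosSemidef) (hB : B.PosSemidef) : (A ⊗ₖ B).PosSemidef := by
  exact hA.kronecker hB

lemma smul_posSemidef {n : Type*} [Fintype n] {w : ℝ} (hw : 0 ≤ w)
    {A : Matrix n n ℂ} (hA : A.PosSemidef) : ((w : ℂ) • A).PosSemidef := by
  constructor
  · unfold Matrix.IsHermitian
    rw [conjTranspose_smul, hA.1.eq]
    congr 1
    simp
  · intro x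
    have := hA.2 x
    have hw' : (0 : ℂ) ≤ (w : ℂ) := by exact_mod_cast hw
    exact (hA.smul hw').2 x

lemma ptransposeA_kron {d₁ d₂ : ℕ} (A : Matrix (Fin d₁) (Fin d₁) ℂ)
    (B : Matrix (Fin d₂) (Fin d₂) ℂ) : ptransposeA (A ⊗ₖ B) = Aᵀ ⊗ₖ B := by
  ext p q
  simp [ptransposeA, kroneckerMap_apply, mul_comm]

lemma sum_posSemidef {ι n : Type*} [Fintype n] (s : Finset ι) (f : ι → Matrix n n ℂ)
    (h : ∀ i ∈ s, (f i).PosSemidef) : (∑ i ∈ s, f i).PosSemidef :=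
  Finset.sum_induction f Matrix.PosSemidef (fun _ _ hA hB => hA.add hB)
    Matrix.PosSemidef.zero h

/-- Peres–Horodecki criterion (necessary direction): a separable density matrix
has positive semi-definite partial transpose. -/
theorem separable_implies_ppt {d₁ d₂ : ℕ}
    (ρ : Matrix (Fin d₁ × Fin d₂) (Fin d₁ × Fin d₂) ℂ)
    (hρ : IsDensity ρ) (hsep : SepState ρ) :
    (ptransposeA ρ).PosSemidef := by
  obtain ⟨n, w, σ₁, σ₂, hw, hwsum, h1, h2, hρeq⟩ := hsep
  have hlin : ptransposeA ρ = ∑ i, (w i : ℂ) • ((σ₁ i)ᵀ ⊗ₖ σ₂ i) := by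
    subst hρeq
    ext p q
    simp only [ptransposeA, Matrix.of_apply, Matrix.sum_apply, Matrix.smul_apply,
      kroneckerMap_apply, transpose_apply, smul_eq_mul]
  rw [hlin]
  exact sum_posSemidef _ _ fun i _ =>
    smul_posSemidef (hw i) (kron_posSemidef (h1 i).1.transpose (h2 i).1)
end
end

section
/- Let ρ be the 4×4 density matrix which, in the basis ordering {|1⟩, |d²−2⟩, |d²⟩, |d²−1⟩}, is diag(ρ₁, ρ_{d²−2}, ρ_{d²}, ρ_{d²−1}), and let K be the unitary mapping |1⟩ ↦ (|↑↑⟩+|↓↓⟩)/√2, |d²−2⟩ ↦ |↑↓⟩, |d²⟩ ↦ |↓↑⟩, |d²−1⟩ ↦ (|↑↑⟩−|↓↓⟩)/√2. Then the partial transpose of KρK† (on the second qubit) has eigenvalues (ρ₁+ρ_{d²−1})/2 (twice) and (ρ_{d²−2}+ρ_{d²})/2 ± √[((ρ_{d²−2}+ρ_{d²})/2)² − ρ_{d²−2}ρ_{d²} + ((ρ₁−ρ_{d²−1})/2)²]. -/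
open Matrix Polynomial

noncomputable section

/-- Partial transpose on the second tensor factor. -/
def ptransposeB {d₁ d₂ : ℕ} (ρ : Matrix (Fin d₁ × Fin d₂) (Fin d₁ × Fin d₂) ℂ) :
    Matrix (Fin d₁ × Fin d₂) (Fin d₁ × Fin d₂) ℂ :=
  Matrix.of fun p q => ρ (p.1, q.2) (q.1, p.2)

/-- The unitary `K` mapping the four basis vectors `|1⟩, |d²−2⟩, |d²⟩, |d²−1⟩`
respectively to `(|↑↑⟩+|↓↓⟩)/√2, |↑↓⟩, |↓↑⟩, (|↑↑⟩−|↓↓⟩)/√2`. -/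
def Kiso : Matrix (Fin 2 × Fin 2) (Fin 4) ℂ :=
  Matrix.of fun p j =>
    if j = 0 then (if p.1 = p.2 then ((Real.sqrt 2 : ℂ))⁻¹ else 0)
    else if j = 1 then (if p = (0, 1) then 1 else 0)
    else if j = 2 then (if p = (1, 0) then 1 else 0)
    else if p = (0, 0) then ((Real.sqrt 2 : ℂ))⁻¹
    else if p = (1, 1) then -((Real.sqrt 2 : ℂ))⁻¹
    else 0

/-- `ρ = diag(ρ₁, ρ_{d²−2}, ρ_{d²}, ρ_{d²−1})` in the ordered basis
`{|1⟩, |d²−2⟩, |d²⟩, |d²−1⟩}`; here `r1 = ρ₁`, `r2 = ρ_{d²−2}`,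
`r3 = ρ_{d²−1}`, `r4 = ρ_{d²}`. -/
def diagState (r1 r2 r3 r4 : ℝ) : Matrix (Fin 4) (Fin 4) ℂ :=
  Matrix.diagonal ![(r1 : ℂ), (r2 : ℂ), (r4 : ℂ), (r3 : ℂ)]

set_option maxHeartbeats 1000000 in
theorem ptransposeB_reindex_eq (r1 r2 r3 r4 : ℝ) :
    (Matrix.reindex finProdFinEquiv finProdFinEquiv
      (ptransposeB (Kiso * diagState r1 r2 r3 r4 * Kisoᴴ))) =
    !![(((r1+r3)/2 : ℝ) : ℂ), 0, 0, 0;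
       0, (r2 : ℂ), (((r1-r3)/2 : ℝ) : ℂ), 0;
       0, (((r1-r3)/2 : ℝ) : ℂ), (r4 : ℂ), 0;
       0, 0, 0, (((r1+r3)/2 : ℝ) : ℂ)] := by
  have h : ((Real.sqrt 2 : ℝ) : ℂ)⁻¹ * ((Real.sqrt 2 : ℝ) : ℂ)⁻¹ = 2⁻¹ := by
    rw [← mul_inv, ← Complex.ofReal_mul, Real.mul_self_sqrt (by norm_num)]
    norm_num
  have e0 : finProdFinEquiv.symm (0 : Fin (2*2)) = ((0 : Fin 2), (0 : Fin 2)) := by decide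
  have e1 : finProdFinEquiv.symm (1 : Fin (2*2)) = ((0 : Fin 2), (1 : Fin 2)) := by decide
  have e2 : finProdFinEquiv.symm (2 : Fin (2*2)) = ((1 : Fin 2), (0 : Fin 2)) := by decide
  have e3 : finProdFinEquiv.symm (3 : Fin (2*2)) = ((1 : Fin 2), (1 : Fin 2)) := by decide
  ext p q
  fin_cases p <;> fin_cases q <;>
    simp [ptransposeB, Kiso, diagState, Matrix.mul_apply, Fin.sum_univ_four,
      Matrix.conjTranspose_apply, Complex.conj_ofReal, Matrix.diagonal,
      e0, e1, e2, e3, Matrix.vecHead, Matrix.vecTail] <;>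
    push_cast <;>
    first
      | ring1
      | linear_combination (r1 + r3 : ℂ) * h
      | linear_combination (r1 - r3 : ℂ) * h
      | linear_combination (r3 - r1 : ℂ) * h

set_option maxHeartbeats 1000000 in
/-- The partial transpose of `KρK†` has eigenvalues `(ρ₁+ρ_{d²−1})/2` (twice) and
`(ρ_{d²−2}+ρ_{d²})/2 ± √(((ρ_{d²−2}+ρ_{d²})/2)² − ρ_{d²−2}ρ_{d²} + ((ρ₁−ρ_{d²−1})/2)²)`. -/
theorem ptranspose_eigenvalues (r1 r2 r3 r4 : ℝ)
    (h1 : 0 ≤ r1) (h2 : 0 ≤ r2) (h3 : 0 ≤ r3) (h4 : 0 ≤ r4) :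
    (ptransposeB (Kiso * diagState r1 r2 r3 r4 * Kisoᴴ)).charpoly =
      (X - C (((r1 + r3) / 2 : ℝ) : ℂ)) ^ 2 *
        (X - C ((((r2 + r4) / 2 +
          Real.sqrt (((r2 + r4) / 2) ^ 2 - r2 * r4 + ((r1 - r3) / 2) ^ 2)) : ℝ) : ℂ)) *
        (X - C ((((r2 + r4) / 2 -
          Real.sqrt (((r2 + r4) / 2) ^ 2 - r2 * r4 + ((r1 - r3) / 2) ^ 2)) : ℝ) : ℂ)) := by
  rw [← Matrix.charpoly_reindex finProdFinEquiv, ptransposeB_reindex_eq r1 r2 r3 r4]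
  have hnn : 0 ≤ ((r2 + r4) / 2) ^ 2 - r2 * r4 + ((r1 - r3) / 2) ^ 2 := by
    nlinarith [sq_nonneg ((r2 - r4) / 2), sq_nonneg ((r1 - r3) / 2)]
  set s := Real.sqrt (((r2 + r4) / 2) ^ 2 - r2 * r4 + ((r1 - r3) / 2) ^ 2) with hs_def
  have hs : (s : ℝ) ^ 2 = ((r2 + r4) / 2) ^ 2 - r2 * r4 + ((r1 - r3) / 2) ^ 2 :=
    Real.sq_sqrt hnn
  have hsC : ((s : ℝ) : ℂ) ^ 2 =
      (((r2 : ℂ) + r4) / 2) ^ 2 - r2 * r4 + (((r1 : ℂ) - r3) / 2) ^ 2 := by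
    have := congrArg (Complex.ofReal) hs
    push_cast at this ⊢
    linear_combination this
  apply Polynomial.funext
  intro z
  simp [Matrix.charpoly, charmatrix_apply, Matrix.det_succ_row_zero, Fin.sum_univ_succ,
    Matrix.submatrix_apply, Fin.succAbove]
  push_cast
  ring_nf
  linear_combination ((z - ((r1 : ℂ) + r3) / 2) ^ 2) * hsC
end
end

section
/- With the setup of the previous statement, if (ρ₁ − ρ_{d²−1})/2 > √(ρ_{d²−2}·ρ_{d²}), then the partial transpose of KρK† has a negative eigenvalue, and hence KρK† is entangled. -/
open Matrix
open scoped Kronecker ComplexOrder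

noncomputable section

/- ### Auxiliary lemmas -/

lemma kron_conjT {d₁ d₂ : ℕ} (A : Matrix (Fin d₁) (Fin d₁) ℂ) (B : Matrix (Fin d₂) (Fin d₂) ℂ) :
    (A ⊗ₖ B)ᴴ = Aᴴ ⊗ₖ Bᴴ := by
  ext p q
  simp [conjTranspose_apply, kroneckerMap_apply, mul_comm]

lemma psd_kron {d₁ d₂ : ℕ} {A : Matrix (Fin d₁) (Fin d₁) ℂ} {B : Matrix (Fin d₂) (Fin d₂) ℂ}
    (hA : A.PosSemidef) (hB : B.PosSemidef) : (A ⊗ₖ B).PosSemidef := by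
  exact hA.kronecker hB

lemma ptB_kron {d₁ d₂ : ℕ} (A : Matrix (Fin d₁) (Fin d₁) ℂ) (B : Matrix (Fin d₂) (Fin d₂) ℂ) :
    ptransposeB (A ⊗ₖ B) = A ⊗ₖ Bᵀ := by
  ext p q
  simp [ptransposeB, kroneckerMap_apply]

lemma ptB_sum {d₁ d₂ n : ℕ} (f : Fin n → Matrix (Fin d₁ × Fin d₂) (Fin d₁ × Fin d₂) ℂ) :
    ptransposeB (∑ i, f i) = ∑ i, ptransposeB (f i) := by
  ext p q
  simp [ptransposeB, Matrix.sum_apply]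

lemma ptB_smul {d₁ d₂ : ℕ} (c : ℂ) (A : Matrix (Fin d₁ × Fin d₂) (Fin d₁ × Fin d₂) ℂ) :
    ptransposeB (c • A) = c • ptransposeB A := by
  ext p q
  simp [ptransposeB]

lemma psd_smul {m : Type*} [Fintype m] {A : Matrix m m ℂ} (hA : A.PosSemidef) {w : ℝ}
    (hw : 0 ≤ w) : ((w : ℂ) • A).PosSemidef := by
  refine posSemidef_iff_dotProduct_mulVec.mpr ⟨?_, ?_⟩
  · unfold Matrix.IsHermitian
    rw [conjTranspose_smul, hA.1.eq]
    congr 1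
    simp
  · intro x
    have h0 := hA.dotProduct_mulVec_nonneg x
    rw [Matrix.smul_mulVec, dotProduct_smul, smul_eq_mul]
    have hw' : (0 : ℂ) ≤ (w : ℂ) := by
      rw [Complex.le_def]; simp [hw]
    exact mul_nonneg hw' h0

/-- The Peres–Horodecki necessary criterion: the partial transpose of a
separable state is positive semi-definite. -/
lemma sep_ptB_psd {d₁ d₂ : ℕ} {ρ : Matrix (Fin d₁ × Fin d₂) (Fin d₁ × Fin d₂) ℂ}
    (h : SepState ρ) : (ptransposeB ρ).PosSemidef := by
  obtain ⟨n, w, σ₁, σ₂, hw, -, hσ₁, hσ₂, rfl⟩ := h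
  rw [ptB_sum]
  apply Finset.sum_induction _ Matrix.PosSemidef (fun A B hA hB => hA.add hB)
  · constructor
    · simp [Matrix.IsHermitian]
    · intro x; simp
  · intro i _
    rw [ptB_smul, ptB_kron]
    exact psd_smul (psd_kron (hσ₁ i).1 ((hσ₂ i).1.transpose)) (hw i)

/-- The explicit form of `K diag(r1,r2,r4,r3) Kᴴ`. -/
def Mex (r1 r2 r3 r4 : ℝ) : Matrix (Fin 2 × Fin 2) (Fin 2 × Fin 2) ℂ :=
  Matrix.of fun p q =>
    if p = (0,0) then (if q = (0,0) then (((r1+r3)/2 : ℝ) : ℂ)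
      else if q = (1,1) then (((r1-r3)/2 : ℝ) : ℂ) else 0)
    else if p = (0,1) then (if q = (0,1) then (r2 : ℂ) else 0)
    else if p = (1,0) then (if q = (1,0) then (r4 : ℂ) else 0)
    else (if q = (0,0) then (((r1-r3)/2 : ℝ) : ℂ)
      else if q = (1,1) then (((r1+r3)/2 : ℝ) : ℂ) else 0)

set_option maxHeartbeats 2000000 in
lemma Mval (r1 r2 r3 r4 : ℝ) :
    Kiso * diagState r1 r2 r3 r4 * Kisoᴴ = Mex r1 r2 r3 r4 := by
  have h2 : ((Real.sqrt 2 : ℂ))⁻¹ * ((Real.sqrt 2 : ℂ))⁻¹ = (2 : ℂ)⁻¹ := by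
    rw [← mul_inv, ← Complex.ofReal_mul, Real.mul_self_sqrt (by norm_num)]; norm_num
  ext ⟨⟨a, ha⟩, ⟨b, hb⟩⟩ ⟨⟨c, hc⟩, ⟨d, hd⟩⟩
  interval_cases a <;> interval_cases b <;> interval_cases c <;> interval_cases d <;>
    simp (config := { decide := true }) [Kiso, diagState, Mex, mul_apply,
      Fin.sum_univ_four, Prod.ext_iff, Fin.ext_iff, h2, Matrix.diagonal_apply, pow_two, -Fin.val_eq_zero_iff] <;>
    first
      | rfl
      | linear_combination ((r1:ℂ) + (r3:ℂ)) * h2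
      | linear_combination ((r1:ℂ) - (r3:ℂ)) * h2

/-- If `(ρ₁ − ρ_{d²−1})/2 > √(ρ_{d²−2}·ρ_{d²})` then the partial transpose of
`KρK†` has a negative eigenvalue, hence `KρK†` is entangled. -/
theorem diag_state_becomes_entangled (r1 r2 r3 r4 : ℝ)
    (h12 : r2 ≤ r1) (h23 : r3 ≤ r2) (h34 : r4 ≤ r3) (h4 : 0 ≤ r4)
    (hcond : Real.sqrt (r2 * r4) < (r1 - r3) / 2) :
    (∃ μ : ℝ, μ < 0 ∧ ∃ v : Fin 2 × Fin 2 → ℂ, v ≠ 0 ∧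
        ptransposeB (Kiso * diagState r1 r2 r3 r4 * Kisoᴴ) *ᵥ v = (μ : ℂ) • v) ∧
      ¬ SepState (Kiso * diagState r1 r2 r3 r4 * Kisoᴴ) := by
  have hr3 : 0 ≤ r3 := le_trans h4 h34
  have hr2 : 0 ≤ r2 := le_trans hr3 h23
  have hrr : 0 ≤ r2 * r4 := mul_nonneg hr2 h4
  set t : ℝ := (r1 - r3) / 2 with ht
  have ht0 : 0 < t := lt_of_le_of_lt (Real.sqrt_nonneg _) hcond
  have htt : r2 * r4 < t ^ 2 := by
    nlinarith [Real.sq_sqrt hrr, Real.sqrt_nonneg (r2 * r4)]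
  set s : ℝ := Real.sqrt (((r2 - r4) / 2) ^ 2 + t ^ 2) with hs
  have hs2 : s ^ 2 = ((r2 - r4) / 2) ^ 2 + t ^ 2 :=
    Real.sq_sqrt (by positivity)
  have hsnn : 0 ≤ s := Real.sqrt_nonneg _
  set μ : ℝ := (r2 + r4) / 2 - s with hμ
  have hμneg : μ < 0 := by
    by_contra hcon
    push_neg at hcon
    nlinarith [hs2, htt,
      mul_nonneg (show (0:ℝ) ≤ (r2+r4)/2 - s by rw [hμ] at hcon; linarith)
        (show (0:ℝ) ≤ (r2+r4)/2 + s by linarith)]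
  have hquad : t * t + r4 * (μ - r2) = μ * (μ - r2) := by
    rw [hμ]; nlinarith [hs2]
  set v : Fin 2 × Fin 2 → ℂ :=
    fun p => if p = (0,1) then (t : ℂ) else if p = (1,0) then ((μ : ℂ) - r2) else 0 with hv
  have hvne : v ≠ 0 := by
    intro h
    have := congrFun h ((0 : Fin 2), (1 : Fin 2))
    simp [hv] at this
    exact absurd this (ne_of_gt ht0)
  have heig : ptransposeB (Kiso * diagState r1 r2 r3 r4 * Kisoᴴ) *ᵥ v = (μ : ℂ) • v := by
    rw [Mval]
    have hquadC : (t : ℂ) * t + (r4 : ℂ) * ((μ : ℂ) - r2) = (μ : ℂ) * ((μ : ℂ) - r2) := by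
      exact_mod_cast congrArg (Complex.ofReal) hquad
    have hs2C : ((s : ℝ) : ℂ) ^ 2 = (((r2 - r4) / 2 : ℝ) : ℂ) ^ 2 + ((t : ℝ) : ℂ) ^ 2 := by
      exact_mod_cast congrArg (Complex.ofReal) hs2
    have htC : (((r1 - r3) / 2 : ℝ) : ℂ) = (t : ℂ) := by rw [ht]
    push_cast [ht, hμ] at hquadC hs2C
    funext ⟨a, b⟩
    fin_cases a <;> fin_cases b <;>
      simp [Mex, ptransposeB, mulVec, dotProduct, Fintype.sum_prod_type,
        Fin.sum_univ_two, Prod.ext_iff, hv, Pi.smul_apply, smul_eq_mul, htC] <;>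
      push_cast [ht, hμ]
    all_goals first | exact hquadC | ring1
  constructor
  · exact ⟨μ, hμneg, v, hvne, heig⟩
  · intro hsep
    have hPSD := sep_ptB_psd hsep
    have h0 := hPSD.dotProduct_mulVec_nonneg v
    rw [heig, dotProduct_smul, smul_eq_mul] at h0
    have hdot : dotProduct (star v) v = ((t ^ 2 + (μ - r2) ^ 2 : ℝ) : ℂ) := by
      simp [dotProduct, Fintype.sum_prod_type, Fin.sum_univ_two, hv, Pi.star_apply,
        Prod.ext_iff, map_sub, Complex.conj_ofReal]
      push_cast
      ring
    rw [hdot, ← Complex.ofReal_mul] at h0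
    have hre : 0 ≤ μ * (t ^ 2 + (μ - r2) ^ 2) := by exact_mod_cast h0
    nlinarith [sq_nonneg (μ - r2), ht0, hμneg]

end
end

section
/- Let ρ_e be an entangled density matrix, ρ₀ a separable density matrix minimizing the Hilbert–Schmidt distance to ρ_e over the (compact convex) set of separable states, and define E = (ρ₀ − ρ_e − ⟨ρ₀|ρ₀ − ρ_e⟩·I)/‖ρ₀ − ρ_e‖. Then Tr(ρ_e E) = −‖ρ₀ − ρ_e‖ < 0, Tr(ρ₀ E) = 0, and Tr(ρ_s E) ≥ 0 for every separable density matrix ρ_s; i.e., E is an optimal entanglement witness (Bertlmann–Narnhofer–Thirring theorem). -/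
open Matrix
open scoped Kronecker ComplexOrder

noncomputable section

/-- Hilbert–Schmidt inner product `⟨A|B⟩ = Tr(A†B)`. -/
def hsInner {n : Type*} [Fintype n] (A B : Matrix n n ℂ) : ℂ :=
  (Aᴴ * B).trace

/-- Hilbert–Schmidt norm. -/
def hsNorm {n : Type*} [Fintype n] (A : Matrix n n ℂ) : ℝ :=
  Real.sqrt ((Aᴴ * A).trace.re)

section Helpers

set_option linter.unusedSectionVars false

variable {m : Type*} [Fintype m] [DecidableEq m]

lemma tr_self (A : Matrix m m ℂ) :
    (Aᴴ * A).trace = ((∑ j, ∑ i, Complex.normSq (A i j) : ℝ) : ℂ) := by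
  push_cast
  simp only [Matrix.trace, Matrix.mul_apply, Matrix.conjTranspose_apply, Matrix.diag,
    Finset.sum_apply]
  exact Finset.sum_congr rfl fun j _ => Finset.sum_congr rfl fun i _ => by
    rw [mul_comm]; exact Complex.mul_conj _

lemma tr_self_re_nonneg (A : Matrix m m ℂ) : 0 ≤ (Aᴴ * A).trace.re := by
  rw [tr_self]
  simp only [Complex.ofReal_re]
  exact Finset.sum_nonneg fun j _ => Finset.sum_nonneg fun i _ => Complex.normSq_nonneg _

lemma tr_self_re_pos (A : Matrix m m ℂ) (hA : A ≠ 0) : 0 < (Aᴴ * A).trace.re := by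
  rw [tr_self]
  simp only [Complex.ofReal_re]
  obtain ⟨i, j, hij⟩ : ∃ i j, A i j ≠ 0 := by
    by_contra h
    push_neg at h
    exact hA (by ext i j; simp [h])
  refine Finset.sum_pos' (fun j _ => Finset.sum_nonneg fun i _ => Complex.normSq_nonneg _) ?_
  exact ⟨j, Finset.mem_univ _, Finset.sum_pos' (fun i _ => Complex.normSq_nonneg _)
    ⟨i, Finset.mem_univ _, Complex.normSq_pos.mpr hij⟩⟩

lemma trace_conj (A B : Matrix m m ℂ) :
    (Bᴴ * A).trace = starRingEnd ℂ ((Aᴴ * B).trace) := by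
  have h := Matrix.trace_conjTranspose (Aᴴ * B)
  rw [Matrix.conjTranspose_mul, Matrix.conjTranspose_conjTranspose] at h
  exact h

lemma expand_re (Δ D : Matrix m m ℂ) (t : ℝ) :
    (((Δ + (t:ℂ) • D)ᴴ * (Δ + (t:ℂ) • D)).trace).re
      = ((Δᴴ*Δ).trace).re + 2*t*((Δᴴ*D).trace).re + t^2*((Dᴴ*D).trace).re := by
  simp only [Matrix.conjTranspose_add, Matrix.conjTranspose_smul, Matrix.add_mul,
    Matrix.mul_add, Matrix.smul_mul, Matrix.mul_smul, Matrix.trace_add, Matrix.trace_smul,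
    smul_smul, trace_conj D Δ]
  simp only [Complex.star_def, Complex.conj_ofReal, smul_eq_mul, Complex.add_re,
    Complex.re_ofReal_mul, Complex.conj_re]
  ring

lemma posSemidef_rsmul {A : Matrix m m ℂ} (hA : A.PosSemidef) {c : ℝ} (hc : 0 ≤ c) :
    ((c:ℂ) • A).PosSemidef := by
  constructor
  · unfold Matrix.IsHermitian
    rw [Matrix.conjTranspose_smul, hA.1.eq]
    simp [Complex.star_def, Complex.conj_ofReal]
  · intro x
    exact (hA.smul (show (0:ℂ) ≤ c by exact_mod_cast hc)).2 x

lemma sep_convex {d₁ d₂ : ℕ} {ρ σ : Matrix (Fin d₁ × Fin d₂) (Fin d₁ × Fin d₂) ℂ}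
    {a b : ℝ} (ha : 0 ≤ a) (hb : 0 ≤ b) (hab : a + b = 1)
    (hρ : SepState ρ) (hσ : SepState σ) : SepState ((a:ℂ) • ρ + (b:ℂ) • σ) := by
  obtain ⟨n, w, s1, s2, hw, hw1, hs1, hs2, hρ'⟩ := hρ
  obtain ⟨p, v, t1, t2, hv, hv1, ht1, ht2, hσ'⟩ := hσ
  refine ⟨n + p, Fin.addCases (fun i => a * w i) (fun j => b * v j),
    Fin.addCases s1 t1, Fin.addCases s2 t2, ?_, ?_, ?_, ?_, ?_⟩
  · intro i
    induction i using Fin.addCases with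
    | left i => simpa using mul_nonneg ha (hw i)
    | right j => simpa using mul_nonneg hb (hv j)
  · rw [Fin.sum_univ_add]
    simp only [Fin.addCases_left, Fin.addCases_right, ← Finset.mul_sum, hw1, hv1]
    simpa using hab
  · intro i
    induction i using Fin.addCases with
    | left i => simpa using hs1 i
    | right j => simpa using ht1 j
  · intro i
    induction i using Fin.addCases with
    | left i => simpa using hs2 i
    | right j => simpa using ht2 j
  · rw [hρ', hσ', Fin.sum_univ_add]
    simp only [Fin.addCases_left, Fin.addCases_right, Finset.smul_sum, smul_smul]
    push_cast
    rfl

end Helpers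

/-- Bertlmann–Narnhofer–Thirring theorem: for an entangled state `ρ_e` and the
nearest separable state `ρ₀`, the operator
`E = (ρ₀ − ρ_e − ⟨ρ₀|ρ₀ − ρ_e⟩ I)/‖ρ₀ − ρ_e‖` is an optimal entanglement
witness: `Tr(ρ_e E) = −‖ρ₀ − ρ_e‖ < 0`, `Tr(ρ₀ E) = 0`, and `Tr(ρ_s E) ≥ 0` for
every separable state `ρ_s`. -/
theorem bnt_optimal_witness {d₁ d₂ : ℕ}
    (ρe ρ₀ : Matrix (Fin d₁ × Fin d₂) (Fin d₁ × Fin d₂) ℂ)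
    (hρe : IsDensity ρe) (hent : ¬ SepState ρe)
    (hρ₀ : IsDensity ρ₀) (hsep₀ : SepState ρ₀)
    (hmin : ∀ σ : Matrix (Fin d₁ × Fin d₂) (Fin d₁ × Fin d₂) ℂ,
      IsDensity σ → SepState σ → hsNorm (ρ₀ - ρe) ≤ hsNorm (σ - ρe))
    (E : Matrix (Fin d₁ × Fin d₂) (Fin d₁ × Fin d₂) ℂ)
    (hE : E = ((hsNorm (ρ₀ - ρe) : ℂ))⁻¹ •
      (ρ₀ - ρe - hsInner ρ₀ (ρ₀ - ρe) • 1)) :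
    (ρe * E).trace = -(hsNorm (ρ₀ - ρe) : ℂ) ∧
      0 < hsNorm (ρ₀ - ρe) ∧
      (ρ₀ * E).trace = 0 ∧
      ∀ ρs : Matrix (Fin d₁ × Fin d₂) (Fin d₁ × Fin d₂) ℂ,
        IsDensity ρs → SepState ρs → 0 ≤ ((ρs * E).trace).re := by
  set Δ : Matrix (Fin d₁ × Fin d₂) (Fin d₁ × Fin d₂) ℂ := ρ₀ - ρe with hΔdef
  have hΔh : Δᴴ = Δ := by
    rw [hΔdef, Matrix.conjTranspose_sub, hρ₀.1.1.eq, hρe.1.1.eq]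
  have hΔ0 : Δ ≠ 0 := sub_ne_zero.mpr fun h => hent (h ▸ hsep₀)
  have hgpos : 0 < (Δᴴ * Δ).trace.re := tr_self_re_pos Δ hΔ0
  have hNpos : 0 < hsNorm Δ := Real.sqrt_pos.mpr hgpos
  have hNne : ((hsNorm Δ : ℝ) : ℂ) ≠ 0 := by
    exact_mod_cast hNpos.ne'
  have hN2 : (Δᴴ * Δ).trace = ((hsNorm Δ : ℝ) : ℂ) ^ 2 := by
    have h1 : (Δᴴ * Δ).trace = (((Δᴴ * Δ).trace.re : ℝ) : ℂ) := by
      rw [tr_self]; simp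
    have h2 : (hsNorm Δ) ^ 2 = (Δᴴ * Δ).trace.re := Real.sq_sqrt hgpos.le
    rw [h1, ← h2]
    push_cast
    ring
  have hc : hsInner ρ₀ Δ = (ρ₀ * Δ).trace := by
    rw [hsInner, hρ₀.1.1.eq]
  have key : ∀ σ : Matrix (Fin d₁ × Fin d₂) (Fin d₁ × Fin d₂) ℂ, σ.trace = 1 →
      (σ * E).trace = ((hsNorm Δ : ℝ) : ℂ)⁻¹ * ((σ * Δ).trace - (ρ₀ * Δ).trace) := by
    intro σ hσ
    rw [hE, Matrix.mul_smul, Matrix.trace_smul, smul_eq_mul]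
    congr 1
    rw [Matrix.mul_sub, Matrix.trace_sub, Matrix.mul_smul, Matrix.trace_smul,
      Matrix.mul_one, hσ, smul_eq_mul, mul_one, hc]
  refine ⟨?_, hNpos, ?_, ?_⟩
  · rw [key ρe hρe.2]
    have hd : (ρe * Δ).trace - (ρ₀ * Δ).trace = -(((hsNorm Δ : ℝ) : ℂ) ^ 2) := by
      rw [← Matrix.trace_sub, ← Matrix.sub_mul]
      have h1 : ρe - ρ₀ = -Δ := by rw [hΔdef]; abel
      rw [h1, Matrix.neg_mul, Matrix.trace_neg]
      congr 1
      rw [← hN2, hΔh]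
    rw [hd]
    field_simp
  · rw [key ρ₀ hρ₀.2, sub_self, mul_zero]
  · intro ρs hρs hseps
    rw [key ρs hρs.2, ← Complex.ofReal_inv, Complex.re_ofReal_mul]
    apply mul_nonneg (inv_nonneg.mpr hNpos.le)
    set D : Matrix (Fin d₁ × Fin d₂) (Fin d₁ × Fin d₂) ℂ := ρs - ρ₀ with hDdef
    have hDz : (ρs * Δ).trace - (ρ₀ * Δ).trace = (Δᴴ * D).trace := by
      rw [← Matrix.trace_sub, ← Matrix.sub_mul, hΔh, ← hDdef, Matrix.trace_mul_comm]
    rw [hDz]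
    set r := ((Δᴴ * D).trace).re with hrdef
    set gD := ((Dᴴ * D).trace).re with hgDdef
    have hgD : 0 ≤ gD := tr_self_re_nonneg D
    have hkey : ∀ t : ℝ, 0 < t → t ≤ 1 → 0 ≤ 2*t*r + t^2*gD := by
      intro t ht0 ht1
      have hsep : SepState ((((1-t : ℝ)) : ℂ) • ρ₀ + ((t : ℝ) : ℂ) • ρs) :=
        sep_convex (by linarith) ht0.le (by ring) hsep₀ hseps
      have hden : IsDensity ((((1-t : ℝ)) : ℂ) • ρ₀ + ((t : ℝ) : ℂ) • ρs) := by
        constructor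
        · exact (posSemidef_rsmul hρ₀.1 (by linarith)).add (posSemidef_rsmul hρs.1 ht0.le)
        · rw [Matrix.trace_add, Matrix.trace_smul, Matrix.trace_smul, hρ₀.2, hρs.2]
          push_cast
          simp only [smul_eq_mul]
          ring
      have hle := hmin _ hden hsep
      have hst : (((1-t : ℝ)) : ℂ) • ρ₀ + ((t : ℝ) : ℂ) • ρs - ρe = Δ + (t:ℂ) • D := by
        rw [hΔdef, hDdef]
        push_cast
        module
      rw [hst] at hle
      have h2 : (hsNorm Δ)^2 ≤ (hsNorm (Δ + (t:ℂ) • D))^2 :=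
        pow_le_pow_left₀ hNpos.le hle 2
      rw [hsNorm, hsNorm, Real.sq_sqrt (tr_self_re_nonneg _),
        Real.sq_sqrt (tr_self_re_nonneg _), expand_re] at h2
      linarith
    by_contra hr
    push_neg at hr
    have hrneg : r < 0 := hr
    set t := min 1 ((-r)/(gD+1)) with htdef
    have ht0 : 0 < t := lt_min one_pos (div_pos (by linarith) (by linarith))
    have ht1 : t ≤ 1 := min_le_left _ _
    have h := hkey t ht0 ht1
    have htg : t * gD ≤ -r := by
      have h1 : t ≤ (-r)/(gD+1) := min_le_right _ _
      calc t * gD ≤ ((-r)/(gD+1)) * gD := mul_le_mul_of_nonneg_right h1 hgD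
        _ ≤ -r := by
            rw [div_mul_eq_mul_div, div_le_iff₀ (by linarith : (0:ℝ) < gD + 1)]
            nlinarith
    nlinarith [mul_le_mul_of_nonneg_left htg ht0.le, mul_pos ht0 (neg_pos.mpr hrneg)]
end
end
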